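/- Let q ≥ 0. There exists a constant C > 0, independent of r, t, k, m, such that for all r > 0, all 0 < t ≤ r^α, and all k, m > 0 satisfying either k ≥ t^{1/α} or q < α + β, one has ∫_0^t (1 ∧ k/s^{1/α})^q · Φ((k∨s^{1/α})/r) · ℓ(m/(k∨s^{1/α})) ds ≤ C·t·(1 ∧ k/t^{1/α})^q · Φ((k∨t^{1/α})/r) · ℓ(m/(k∨t^{1/α})). -/

import Mathlib

open Set Metric MeasureTheory Real Filter Topology

noncomputable section

/-- `f` satisfies the lower scaling condition at zero with index `b`. -/
def HasLowerScaling (f : ℝ → ℝ) (b : ℝ) : Prop :=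
  ∃ C : ℝ, 1 ≤ C ∧ ∀ s r : ℝ, 0 < s → s ≤ r → r ≤ 1 → C⁻¹ * (r / s) ^ b ≤ f r / f s

/-- `f` satisfies the upper scaling condition at zero with index `b`. -/
def HasUpperScaling (f : ℝ → ℝ) (b : ℝ) : Prop :=
  ∃ C : ℝ, 1 ≤ C ∧ ∀ s r : ℝ, 0 < s → s ≤ r → r ≤ 1 → f r / f s ≤ C * (r / s) ^ b

/-- The lower Matuszewska index of `f` at zero equals `β`,
i.e. `β` is the supremum of the indices for which the lower scaling condition holds. -/
def LowerIndexIs (f : ℝ → ℝ) (β : ℝ) : Prop :=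
  (∀ b : ℝ, b < β → HasLowerScaling f b) ∧ (∀ b : ℝ, β < b → ¬ HasLowerScaling f b)

/-- The upper Matuszewska index of `f` at zero equals `β`,
i.e. `β` is the infimum of the indices for which the upper scaling condition holds. -/
def UpperIndexIs (f : ℝ → ℝ) (β : ℝ) : Prop :=
  (∀ b : ℝ, β < b → HasUpperScaling f b) ∧ (∀ b : ℝ, b < β → ¬ HasUpperScaling f b)

/-- `f` is almost increasing on `(0,1]`. -/
def AlmostIncreasingOn01 (f : ℝ → ℝ) : Prop :=
  ∃ C : ℝ, 1 ≤ C ∧ ∀ s r : ℝ, 0 < s → s ≤ r → r ≤ 1 → f s ≤ C * f r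

/-- `f` is almost decreasing on `(0,1]`. -/
def AlmostDecreasingOn01 (f : ℝ → ℝ) : Prop :=
  ∃ C : ℝ, 1 ≤ C ∧ ∀ s r : ℝ, 0 < s → s ≤ r → r ≤ 1 → f r ≤ C * f s

/-- A positive Borel function on `(0,∞)`, equal to `1` on `[1,∞)`. -/
def StdFun (f : ℝ → ℝ) : Prop :=
  Measurable f ∧ (∀ r : ℝ, 0 < r → 0 < f r) ∧ (∀ r : ℝ, 1 ≤ r → f r = 1)

/-- The scaling condition for the slowly varying factor `ℓ`, with parameters `β₁, β₂`. -/
def EllScaling (l : ℝ → ℝ) (β₁ β₂ : ℝ) : Prop :=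
  ∀ ε : ℝ, 0 < ε → ∃ C : ℝ, 1 ≤ C ∧ ∀ s r : ℝ, 0 < s → s ≤ r → r ≤ 1 →
    C⁻¹ * (r / s) ^ (-(min ε β₁)) ≤ l r / l s ∧ l r / l s ≤ C * (r / s) ^ (min ε β₂)

/-- `l` has both Matuszewska indices at zero equal to `0`. -/
def SlowlyVaryingScaling (l : ℝ → ℝ) : Prop :=
  ∀ ε : ℝ, 0 < ε → ∃ C : ℝ, 1 ≤ C ∧ ∀ s r : ℝ, 0 < s → s ≤ r → r ≤ 1 →
    C⁻¹ * (r / s) ^ (-ε) ≤ l r / l s ∧ l r / l s ≤ C * (r / s) ^ ε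

/-- The distance to the boundary of `D`. -/
def dd {d : ℕ} (D : Set (EuclideanSpace ℝ (Fin d))) (x : EuclideanSpace ℝ (Fin d)) : ℝ :=
  Metric.infDist x (frontier D)

/-- The function `A_{f,g,h}(t,x,y)`. -/
def Afun {d : ℕ} (α : ℝ) (D : Set (EuclideanSpace ℝ (Fin d))) (f g h : ℝ → ℝ)
    (t : ℝ) (x y : EuclideanSpace ℝ (Fin d)) : ℝ :=
  f (max (min (dd D x) (dd D y)) (t ^ (1 / α)) / dist x y) *
  g (max (max (dd D x) (dd D y)) (t ^ (1 / α)) / dist x y) *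
  h (max (min (dd D x) (dd D y)) (t ^ (1 / α)) /
      min (max (max (dd D x) (dd D y)) (t ^ (1 / α))) (dist x y))

/-- The inward unit vector `𝐧ₓ = (x - Qₓ)/δ_D(x)`. -/
def nv {d : ℕ} (D : Set (EuclideanSpace ℝ (Fin d)))
    (Q : EuclideanSpace ℝ (Fin d) → EuclideanSpace ℝ (Fin d))
    (x : EuclideanSpace ℝ (Fin d)) : EuclideanSpace ℝ (Fin d) :=
  (dd D x)⁻¹ • (x - Q x)

/-- `∫_a^b A_{f,g,h}(t,x,x+u𝐧ₓ) A_{f,g,h}(t,x+u𝐧ₓ,y) u^{-α-1} du`. -/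
def Iint {d : ℕ} (α : ℝ) (D : Set (EuclideanSpace ℝ (Fin d)))
    (Q : EuclideanSpace ℝ (Fin d) → EuclideanSpace ℝ (Fin d))
    (f g h : ℝ → ℝ) (a b t : ℝ) (x y : EuclideanSpace ℝ (Fin d)) : ℝ :=
  ∫ u in Set.Ioo a b,
    Afun α D f g h t x (x + u • nv D Q x) * Afun α D f g h t (x + u • nv D Q x) y *
      u ^ (-α - 1)

/-- `∫_a^b f₀(k₂/u) f₂(u/rr) l(k₁/u) u^{-α-1} du`. -/
def Jint (α : ℝ) (f₀ f₂ l : ℝ → ℝ) (a b rr k₁ k₂ : ℝ) : ℝ :=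
  ∫ u in Set.Ioo a b, f₀ (k₂ / u) * f₂ (u / rr) * l (k₁ / u) * u ^ (-α - 1)


lemma aux_rpow_merge (x : ℝ) (hx : 0 < x) (a b c : ℝ) :
    x ^ a * (x ^ b * x ^ c)⁻¹ = x ^ (a - b - c) := by
  rw [← Real.rpow_add hx, ← Real.rpow_neg hx.le, ← Real.rpow_add hx]
  ring_nf


lemma aux_phi_bound (Φ : ℝ → ℝ) (hpos : ∀ r : ℝ, 0 < r → 0 < Φ r)
    (b CP : ℝ) (hCP : 1 ≤ CP)
    (hsc : ∀ s r : ℝ, 0 < s → s ≤ r → r ≤ 1 → CP⁻¹ * (r / s) ^ b ≤ Φ r / Φ s)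
    (w T r : ℝ) (hw : 0 < w) (hwT : w ≤ T) (hTr : T ≤ r) :
    Φ (w / r) ≤ CP * (w / T) ^ b * Φ (T / r) := by
  have hT : 0 < T := hw.trans_le hwT
  have hr : 0 < r := hT.trans_le hTr
  have h1 : 0 < Φ (w / r) := hpos _ (div_pos hw hr)
  have h2 : 0 < Φ (T / r) := hpos _ (div_pos hT hr)
  have hb : (0:ℝ) < (T / w) ^ b := Real.rpow_pos_of_pos (div_pos hT hw) b
  have hratio : (T / r) / (w / r) = T / w := by
    field_simp
  have key := hsc (w / r) (T / r) (div_pos hw hr) (by gcongr) ((div_le_one hr).2 hTr)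
  rw [hratio] at key
  have key2 : CP⁻¹ * (T / w) ^ b * Φ (w / r) ≤ Φ (T / r) := (le_div_iff₀ h1).1 key
  have hinv : (w / T) ^ b = ((T / w) ^ b)⁻¹ := by
    rw [← Real.inv_rpow (by positivity), inv_div]
  have hC0 : CP ≠ 0 := by positivity
  have hb0 : (T / w) ^ b ≠ 0 := hb.ne'
  calc Φ (w / r) = CP * ((T / w) ^ b)⁻¹ * (CP⁻¹ * (T / w) ^ b * Φ (w / r)) := by
        field_simp
    _ ≤ CP * ((T / w) ^ b)⁻¹ * Φ (T / r) :=
        mul_le_mul_of_nonneg_left key2 (by positivity)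
    _ = CP * (w / T) ^ b * Φ (T / r) := by rw [hinv]

lemma aux_l_bound (l : ℝ → ℝ) (hpos : ∀ r : ℝ, 0 < r → 0 < l r)
    (h1l : ∀ r : ℝ, 1 ≤ r → l r = 1)
    (ε Cl : ℝ) (hε : 0 < ε) (hCl : 1 ≤ Cl)
    (hsc : ∀ s r : ℝ, 0 < s → s ≤ r → r ≤ 1 →
      Cl⁻¹ * (r / s) ^ (-ε) ≤ l r / l s ∧ l r / l s ≤ Cl * (r / s) ^ ε)
    (m w T : ℝ) (hm : 0 < m) (hw : 0 < w) (hwT : w ≤ T) :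
    l (m / w) ≤ Cl * (T / w) ^ ε * l (m / T) := by
  have hT : 0 < T := hw.trans_le hwT
  have ha' : (0:ℝ) < m / T := div_pos hm hT
  have ha : (0:ℝ) < m / w := div_pos hm hw
  have haa : m / T ≤ m / w := by gcongr
  have hTw1 : (1:ℝ) ≤ T / w := (one_le_div hw).2 hwT
  have hTwε : (1:ℝ) ≤ (T / w) ^ ε := Real.one_le_rpow hTw1 hε.le
  have hratio : (m / w) / (m / T) = T / w := by field_simp
  rcases le_or_gt 1 (m / T) with h1 | h1
  · rw [h1l _ h1, h1l _ (h1.trans haa), mul_one]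
    exact hTwε.trans (le_mul_of_one_le_left (by positivity) hCl)
  rcases le_or_gt (m / w) 1 with h2 | h2
  · have key := (hsc (m / T) (m / w) ha' haa h2).2
    rw [hratio] at key
    calc l (m / w) = (l (m / w) / l (m / T)) * l (m / T) := by
          rw [div_mul_cancel₀]
          exact (hpos _ ha').ne'
      _ ≤ (Cl * (T / w) ^ ε) * l (m / T) :=
          mul_le_mul_of_nonneg_right key (hpos _ ha').le
  · rw [h1l _ h2.le]
    have hlT : 0 < l (m / T) := hpos _ ha'
    have key := (hsc (m / T) 1 ha' h1.le le_rfl).2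
    rw [h1l _ le_rfl] at key
    have e1 : (1 / (m / T)) ^ ε = ((m / T) ^ ε)⁻¹ := by
      rw [one_div, Real.inv_rpow ha'.le]
    rw [e1, div_le_iff₀ hlT] at key
    have e2 : (T / w) ^ ε * (m / T) ^ ε = (m / w) ^ ε := by
      rw [← Real.mul_rpow (by positivity) (by positivity)]
      congr 1; field_simp
    have h3 : (1:ℝ) ≤ (m / w) ^ ε := Real.one_le_rpow h2.le hε.le
    have hx : (0:ℝ) < (m / T) ^ ε := Real.rpow_pos_of_pos ha' ε
    have e3 : Cl * (T / w) ^ ε * l (m / T)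
        = (Cl * ((m / T) ^ ε)⁻¹ * l (m / T)) * ((T / w) ^ ε * (m / T) ^ ε) := by
      field_simp
    rw [e3, e2]
    calc (1:ℝ) = 1 * 1 := (one_mul 1).symm
      _ ≤ (Cl * ((m / T) ^ ε)⁻¹ * l (m / T)) * (m / w) ^ ε :=
          mul_le_mul key h3 zero_le_one (zero_le_one.trans key)

lemma aux_f_nonneg (α : ℝ) (Φ l : ℝ → ℝ) (hΦpos : ∀ r : ℝ, 0 < r → 0 < Φ r)
    (hlpos : ∀ r : ℝ, 0 < r → 0 < l r) (q r k m : ℝ) (hr : 0 < r) (hk : 0 < k) (hm : 0 < m)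
    (s : ℝ) (hs : 0 < s) :
    0 ≤ min 1 (k / s ^ (1 / α)) ^ q * Φ (max k (s ^ (1 / α)) / r) *
        l (m / max k (s ^ (1 / α))) := by
  have h1 : (0:ℝ) ≤ min 1 (k / s ^ (1 / α)) := le_min zero_le_one (by positivity)
  have h2 : (0:ℝ) < max k (s ^ (1 / α)) := lt_max_iff.2 (Or.inl hk)
  exact mul_nonneg (mul_nonneg (Real.rpow_nonneg h1 q) (hΦpos _ (div_pos h2 hr)).le)
    (hlpos _ (div_pos hm h2)).le

lemma aux_caseA (α : ℝ) (hα0 : 0 < α) (Φ l : ℝ → ℝ)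
    (hΦpos : ∀ r : ℝ, 0 < r → 0 < Φ r) (hlpos : ∀ r : ℝ, 0 < r → 0 < l r)
    (q : ℝ) (hq : 0 ≤ q) (C : ℝ) (hC : 1 ≤ C)
    (r t k m : ℝ) (hr : 0 < r) (ht : 0 < t) (hk : 0 < k) (hm : 0 < m)
    (hkT : t ^ (1 / α) ≤ k) :
    (∫ s in Set.Ioo (0 : ℝ) t,
        min 1 (k / s ^ (1 / α)) ^ q * Φ (max k (s ^ (1 / α)) / r) *
          l (m / max k (s ^ (1 / α))))
      ≤ C * t * min 1 (k / t ^ (1 / α)) ^ q * Φ (max k (t ^ (1 / α)) / r) *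
          l (m / max k (t ^ (1 / α))) := by
  have hp : (0:ℝ) < 1 / α := by positivity
  have hT0 : (0:ℝ) < t ^ (1 / α) := Real.rpow_pos_of_pos ht _
  have hmax : max k (t ^ (1 / α)) = k := max_eq_left hkT
  have hmin : min 1 (k / t ^ (1 / α)) = 1 := min_eq_left ((one_le_div hT0).2 hkT)
  set c : ℝ := Φ (k / r) * l (m / k) with hc
  have hcpos : 0 < c := mul_pos (hΦpos _ (div_pos hk hr)) (hlpos _ (div_pos hm hk))
  have hbound : (∫ s in Set.Ioo (0 : ℝ) t,
      min 1 (k / s ^ (1 / α)) ^ q * Φ (max k (s ^ (1 / α)) / r) *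
        l (m / max k (s ^ (1 / α)))) ≤ ∫ _ in Set.Ioo (0:ℝ) t, c := by
    apply integral_mono_of_nonneg
    · filter_upwards [ae_restrict_mem measurableSet_Ioo] with s hs
      exact aux_f_nonneg α Φ l hΦpos hlpos q r k m hr hk hm s hs.1
    · exact integrableOn_const (by rw [Real.volume_Ioo]; exact ENNReal.ofReal_ne_top)
    · filter_upwards [ae_restrict_mem measurableSet_Ioo] with s hs
      obtain ⟨hs0, hst⟩ := hs
      have hsk : s ^ (1 / α) ≤ k :=
        le_trans (Real.rpow_le_rpow hs0.le hst.le hp.le) hkT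
      have hmax' : max k (s ^ (1 / α)) = k := max_eq_left hsk
      have hmin' : min 1 (k / s ^ (1 / α)) = 1 :=
        min_eq_left ((one_le_div (Real.rpow_pos_of_pos hs0 _)).2 hsk)
      rw [hmax', hmin', Real.one_rpow, one_mul]
  have hconst : (∫ _ in Set.Ioo (0:ℝ) t, c) = t * c := by
    rw [setIntegral_const, Real.volume_real_Ioo_of_le ht.le, sub_zero, smul_eq_mul]
  refine hbound.trans ?_
  rw [hconst, hmax, hmin, Real.one_rpow]
  calc t * c ≤ C * (t * c) := le_mul_of_one_le_left (by positivity) hC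
    _ = C * t * 1 * Φ (k / r) * l (m / k) := by rw [hc]; ring

/-- Lemma 8.2, inequality for `ℓ(m/(k∨s^{1/α}))`. -/
theorem statement_12
    (α β βs : ℝ) (hα0 : 0 < α) (hα2 : α < 2) (hβ : 0 ≤ β) (hβs : β ≤ βs)
    (Φ l : ℝ → ℝ)
    (hΦ : StdFun Φ) (hΦinc : AlmostIncreasingOn01 Φ)
    (hΦlow : LowerIndexIs Φ β) (hΦup : UpperIndexIs Φ βs)
    (hl : StdFun l) (hlscale : SlowlyVaryingScaling l)
    (q : ℝ) (hq : 0 ≤ q) :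
    ∃ C : ℝ, 0 < C ∧
      ∀ r t k m : ℝ, 0 < r → 0 < t → t ≤ r ^ α → 0 < k → 0 < m →
        (t ^ (1 / α) ≤ k ∨ q < α + β) →
        (∫ s in Set.Ioo (0 : ℝ) t,
            min 1 (k / s ^ (1 / α)) ^ q * Φ (max k (s ^ (1 / α)) / r) *
              l (m / max k (s ^ (1 / α))))
          ≤ C * t * min 1 (k / t ^ (1 / α)) ^ q * Φ (max k (t ^ (1 / α)) / r) *
              l (m / max k (t ^ (1 / α))) := by
  obtain ⟨hΦmeas, hΦpos, hΦ1⟩ := hΦ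
  obtain ⟨hlmeas, hlpos, hl1⟩ := hl
  by_cases hqb : q < α + β
  case neg =>
    refine ⟨1, one_pos, fun r t k m hr ht htr hk hm hor => ?_⟩
    exact aux_caseA α hα0 Φ l hΦpos hlpos q hq 1 le_rfl r t k m hr ht hk hm
      (hor.resolve_right hqb)
  case pos =>
    have hp : (0:ℝ) < 1 / α := by positivity
    set ε : ℝ := (α + β - q) / 3 with hεdef
    have hε : 0 < ε := by rw [hεdef]; linarith
    set b : ℝ := β - ε with hbdef
    obtain ⟨CP, hCP1, hCP⟩ := hΦlow.1 b (by rw [hbdef]; linarith)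
    obtain ⟨Cl, hCl1, hCl⟩ := hlscale ε hε
    have hCP0 : (0:ℝ) < CP := lt_of_lt_of_le one_pos hCP1
    have hCl0 : (0:ℝ) < Cl := lt_of_lt_of_le one_pos hCl1
    set γ : ℝ := (b - ε - q) * (1 / α) with hγdef
    have hγ : -1 < γ := by
      have h1 : -α < b - ε - q := by rw [hbdef, hεdef]; linarith
      calc (-1:ℝ) = -α * (1 / α) := by field_simp
        _ < γ := by rw [hγdef]; exact mul_lt_mul_of_pos_right h1 hp
    have hγ1 : (0:ℝ) < γ + 1 := by linarith
    set c₀ : ℝ := (γ + 1)⁻¹ + 1 with hc₀def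
    have hc₀ : 0 < c₀ := by positivity
    refine ⟨max 1 (CP * Cl * c₀), lt_of_lt_of_le one_pos (le_max_left _ _),
      fun r t k m hr ht htr hk hm hor => ?_⟩
    by_cases hkT : t ^ (1 / α) ≤ k
    · exact aux_caseA α hα0 Φ l hΦpos hlpos q hq _ (le_max_left _ _) r t k m hr ht hk hm hkT
    · push_neg at hkT
      set T : ℝ := t ^ (1 / α) with hTdef
      have hT0 : 0 < T := Real.rpow_pos_of_pos ht _
      have hTr : T ≤ r := by
        calc T ≤ (r ^ α) ^ (1 / α) := Real.rpow_le_rpow ht.le htr hp.le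
          _ = r := by
            rw [← Real.rpow_mul hr.le, mul_one_div_cancel hα0.ne', Real.rpow_one]
      have hkα : (k ^ α) ^ (1 / α) = k := by
        rw [← Real.rpow_mul hk.le, mul_one_div_cancel hα0.ne', Real.rpow_one]
      have hkαt : k ^ α < t := by
        have h2 := Real.rpow_lt_rpow hk.le hkT hα0
        rwa [hTdef, ← Real.rpow_mul ht.le, one_div_mul_cancel hα0.ne', Real.rpow_one] at h2
      set D : ℝ := Φ (T / r) * l (m / T) with hDdef
      have hD0 : 0 < D := mul_pos (hΦpos _ (div_pos hT0 hr)) (hlpos _ (div_pos hm hT0))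
      set M : ℝ := CP * Cl * k ^ q * t ^ ((ε - b) * (1 / α)) * D with hMdef
      have hM0 : 0 < M :=
        mul_pos (mul_pos (mul_pos (mul_pos hCP0 hCl0) (Real.rpow_pos_of_pos hk q))
          (Real.rpow_pos_of_pos ht _)) hD0
      have hpt : ∀ s ∈ Set.Ioo (0:ℝ) t,
          min 1 (k / s ^ (1 / α)) ^ q * Φ (max k (s ^ (1 / α)) / r) *
              l (m / max k (s ^ (1 / α)))
            ≤ M * (s ^ γ + t ^ γ) := by
        rintro s ⟨hs0, hst⟩
        set σ : ℝ := max s (k ^ α) with hσdef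
        have hσ0 : 0 < σ := lt_max_iff.2 (Or.inl hs0)
        have hσt : σ ≤ t := max_le hst.le hkαt.le
        set w : ℝ := σ ^ (1 / α) with hwdef
        have hw0 : 0 < w := Real.rpow_pos_of_pos hσ0 _
        have hwT : w ≤ T := Real.rpow_le_rpow hσ0.le hσt hp.le
        have hmax : max k (s ^ (1 / α)) = w := by
          rcases le_total s (k ^ α) with h | h
          · rw [hwdef, hσdef, max_eq_right h, hkα]
            exact max_eq_left (by
              rw [← hkα]; exact Real.rpow_le_rpow hs0.le h hp.le)
          · rw [hwdef, hσdef, max_eq_left h]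
            exact max_eq_right (by
              rw [← hkα]; exact Real.rpow_le_rpow (by positivity) h hp.le)
        have hmin : min 1 (k / s ^ (1 / α)) = k / w := by
          rcases le_total s (k ^ α) with h | h
          · have hw1 : k / w = 1 := by
              rw [hwdef, hσdef, max_eq_right h, hkα, div_self hk.ne']
            rw [hw1]
            refine min_eq_left ((one_le_div (Real.rpow_pos_of_pos hs0 _)).2 ?_)
            rw [← hkα]; exact Real.rpow_le_rpow hs0.le h hp.le
          · have hws : w = s ^ (1 / α) := by rw [hwdef, hσdef, max_eq_left h]
            rw [hws]
            refine min_eq_right ((div_le_one (Real.rpow_pos_of_pos hs0 _)).2 ?_)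
            rw [← hkα]; exact Real.rpow_le_rpow (by positivity) h hp.le
        rw [hmax, hmin]
        have bΦ : Φ (w / r) ≤ CP * (w / T) ^ b * Φ (T / r) :=
          aux_phi_bound Φ hΦpos b CP hCP1 hCP w T r hw0 hwT hTr
        have bl : l (m / w) ≤ Cl * (T / w) ^ ε * l (m / T) :=
          aux_l_bound l hlpos hl1 ε Cl hε hCl1 hCl m w T hm hw0 hwT
        have step1 : (k / w) ^ q * Φ (w / r) * l (m / w)
            ≤ (k / w) ^ q * (CP * (w / T) ^ b * Φ (T / r)) * (Cl * (T / w) ^ ε * l (m / T)) := by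
          have hn1 : (0:ℝ) ≤ CP * (w / T) ^ b * Φ (T / r) :=
            mul_nonneg (by positivity) (hΦpos _ (div_pos hT0 hr)).le
          apply mul_le_mul (mul_le_mul_of_nonneg_left bΦ (by positivity)) bl
            (hlpos _ (div_pos hm hw0)).le
            (mul_nonneg (Real.rpow_nonneg (by positivity) q) hn1)
        refine step1.trans ?_
        have ew : w ^ b * (w ^ q * w ^ ε)⁻¹ = σ ^ γ := by
          rw [aux_rpow_merge w hw0 b q ε, hwdef, ← Real.rpow_mul hσ0.le]
          congr 1; rw [hγdef]; ring
        have eT : T ^ ε * (T ^ b)⁻¹ = t ^ ((ε - b) * (1 / α)) := by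
          rw [← div_eq_mul_inv, ← Real.rpow_sub hT0, hTdef, ← Real.rpow_mul ht.le]
          congr 1; ring
        have hwq : w ^ q ≠ 0 := (Real.rpow_pos_of_pos hw0 q).ne'
        have hwε : w ^ ε ≠ 0 := (Real.rpow_pos_of_pos hw0 ε).ne'
        have hTb : T ^ b ≠ 0 := (Real.rpow_pos_of_pos hT0 b).ne'
        have e : (k / w) ^ q * (CP * (w / T) ^ b * Φ (T / r)) * (Cl * (T / w) ^ ε * l (m / T))
            = M * σ ^ γ := by
          rw [hMdef, hDdef, ← ew, ← eT, Real.div_rpow hk.le hw0.le,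
            Real.div_rpow hw0.le hT0.le, Real.div_rpow hT0.le hw0.le]
          field_simp
        rw [e]
        have hσγ : σ ^ γ ≤ s ^ γ + t ^ γ := by
          rcases le_or_gt 0 γ with hγ0 | hγ0
          · have h3 : σ ^ γ ≤ t ^ γ := Real.rpow_le_rpow hσ0.le hσt hγ0
            have hs' : 0 ≤ s ^ γ := Real.rpow_nonneg hs0.le γ
            linarith
          · have h3 : σ ^ γ ≤ s ^ γ :=
              Real.rpow_le_rpow_of_nonpos hs0 (le_max_left _ _) hγ0.le
            have ht' : 0 ≤ t ^ γ := Real.rpow_nonneg ht.le γ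
            linarith
        exact mul_le_mul_of_nonneg_left hσγ hM0.le
      have hint1 : IntegrableOn (fun s : ℝ => s ^ γ) (Set.Ioo (0:ℝ) t) :=
        ((intervalIntegral.intervalIntegrable_rpow' hγ (a := 0) (b := t)).1).mono_set Set.Ioo_subset_Ioc_self
      have hint2 : IntegrableOn (fun _ : ℝ => t ^ γ) (Set.Ioo (0:ℝ) t) :=
        integrableOn_const (by rw [Real.volume_Ioo]; exact ENNReal.ofReal_ne_top)
      have hint : IntegrableOn (fun s : ℝ => M * (s ^ γ + t ^ γ)) (Set.Ioo (0:ℝ) t) :=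
        (hint1.add hint2).const_mul M
      have hLHS : (∫ s in Set.Ioo (0 : ℝ) t,
          min 1 (k / s ^ (1 / α)) ^ q * Φ (max k (s ^ (1 / α)) / r) *
            l (m / max k (s ^ (1 / α))))
          ≤ ∫ s in Set.Ioo (0:ℝ) t, M * (s ^ γ + t ^ γ) := by
        apply integral_mono_of_nonneg
        · filter_upwards [ae_restrict_mem measurableSet_Ioo] with s hs
          exact aux_f_nonneg α Φ l hΦpos hlpos q r k m hr hk hm s hs.1
        · exact hint
        · filter_upwards [ae_restrict_mem measurableSet_Ioo] with s hs
          exact hpt s hs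
      have hIγ : (∫ s in Set.Ioo (0:ℝ) t, s ^ γ) = t ^ (γ + 1) / (γ + 1) := by
        rw [← integral_Ioc_eq_integral_Ioo, ← intervalIntegral.integral_of_le ht.le,
          integral_rpow (Or.inl hγ), Real.zero_rpow hγ1.ne', sub_zero]
      have hIc : (∫ _ in Set.Ioo (0:ℝ) t, (t ^ γ : ℝ)) = t * t ^ γ := by
        rw [setIntegral_const, Real.volume_real_Ioo_of_le ht.le, sub_zero,
          smul_eq_mul]
      have hIg : (∫ s in Set.Ioo (0:ℝ) t, M * (s ^ γ + t ^ γ))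
          = M * (t ^ (γ + 1) / (γ + 1) + t * t ^ γ) := by
        rw [integral_const_mul, integral_add hint1 hint2, hIγ, hIc]
      have ett : t * t ^ γ = t ^ (γ + 1) := by
        rw [Real.rpow_add ht, Real.rpow_one]; ring
      have e4 : t ^ ((ε - b) * (1 / α)) * t ^ (γ + 1) = t * (T ^ q)⁻¹ := by
        rw [← Real.rpow_add ht]
        have h5 : (ε - b) * (1 / α) + (γ + 1) = 1 + 1 / α * (-q) := by rw [hγdef]; ring
        rw [h5, Real.rpow_add ht, Real.rpow_one, Real.rpow_mul ht.le, ← hTdef,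
          Real.rpow_neg hT0.le]
      have e5 : (k / T) ^ q = k ^ q * (T ^ q)⁻¹ := by
        rw [Real.div_rpow hk.le hT0.le, div_eq_mul_inv]
      have hmaxT : max k T = T := max_eq_right hkT.le
      have hminT : min 1 (k / T) = k / T := min_eq_right ((div_le_one hT0).2 hkT.le)
      have hfin : M * (t ^ (γ + 1) / (γ + 1) + t * t ^ γ)
          = (CP * Cl * c₀) * (t * (k / T) ^ q * Φ (T / r) * l (m / T)) := by
        rw [ett, hMdef, hDdef, hc₀def, e5]
        rw [div_eq_mul_inv (t ^ (γ + 1))]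
        have : CP * Cl * k ^ q * t ^ ((ε - b) * (1 / α)) * (Φ (T / r) * l (m / T)) *
            (t ^ (γ + 1) * (γ + 1)⁻¹ + t ^ (γ + 1))
            = CP * Cl * ((γ + 1)⁻¹ + 1) *
              ((t ^ ((ε - b) * (1 / α)) * t ^ (γ + 1)) * (k ^ q) * Φ (T / r) * l (m / T)) := by
          ring
        rw [this, e4]; ring
      refine hLHS.trans ?_
      rw [hIg, hfin, hmaxT, hminT]
      have hbr : 0 ≤ t * (k / T) ^ q * Φ (T / r) * l (m / T) := by
        have := (hΦpos _ (div_pos hT0 hr)).le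
        have := (hlpos _ (div_pos hm hT0)).le
        positivity
      calc (CP * Cl * c₀) * (t * (k / T) ^ q * Φ (T / r) * l (m / T))
          ≤ max 1 (CP * Cl * c₀) * (t * (k / T) ^ q * Φ (T / r) * l (m / T)) :=
            mul_le_mul_of_nonneg_right (le_max_right _ _) hbr
        _ = max 1 (CP * Cl * c₀) * t * (k / T) ^ q * Φ (T / r) * l (m / T) := by ring
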